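/- Let A ∈ CP_n have a unique CP representation A = Σ_{i=1}^k b_i b_i^T. Then the minimal face of CP_n containing A is the polyhedral cone cone{ b_i b_i^T : 1 ≤ i ≤ k }. -/

import Mathlib

open Matrix

/-- A CP representation of `A`: a multiset of nonnegative, nonzero, pairwise linearly
independent vectors whose rank-one outer products sum to `A`. Counted as a multiset,
i.e. up to reordering of the summands (columns). -/
def IsCPRep {n : ℕ} (A : Matrix (Fin n) (Fin n) ℝ) (L : Multiset (Fin n → ℝ)) : Prop :=
  (∀ b ∈ L, ∀ i, 0 ≤ b i) ∧ (∀ b ∈ L, b ≠ 0) ∧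
  L.Pairwise (fun b c => LinearIndependent ℝ ![b, c]) ∧
  (L.map fun b => vecMulVec b b).sum = A

/-- `A` is completely positive. -/
def IsCP {n : ℕ} (A : Matrix (Fin n) (Fin n) ℝ) : Prop := ∃ L, IsCPRep A L

/-- The cp-rank: minimal number of rank-one summands in a CP representation. -/
noncomputable def cpRank {n : ℕ} (A : Matrix (Fin n) (Fin n) ℝ) : ℕ :=
  sInf {k | ∃ L, IsCPRep A L ∧ Multiset.card L = k}

/-- A minimal CP representation: a CP representation with `cpRank A` summands. -/
def IsMinCPRep {n : ℕ} (A : Matrix (Fin n) (Fin n) ℝ) (L : Multiset (Fin n → ℝ)) : Prop :=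
  IsCPRep A L ∧ Multiset.card L = cpRank A

/-- The graph of a symmetric matrix: `i ~ j` iff `i ≠ j` and `A i j ≠ 0`. -/
def matGraph {n : ℕ} (A : Matrix (Fin n) (Fin n) ℝ) : SimpleGraph (Fin n) where
  Adj i j := i ≠ j ∧ (A i j ≠ 0 ∨ A j i ≠ 0)
  symm := ⟨fun _ _ h => ⟨h.1.symm, h.2.symm⟩⟩
  loopless := ⟨fun _ h => h.1 rfl⟩

/-- The comparison matrix `M(A)`. -/
noncomputable def compMatrix {n : ℕ} (A : Matrix (Fin n) (Fin n) ℝ) : Matrix (Fin n) (Fin n) ℝ :=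
  fun i j => if i = j then |A i j| else -|A i j|

/-- A face of the cone `CP_n`: a subcone `F` such that `X, Y ∈ CP_n` and `X + Y ∈ F`
imply `X, Y ∈ F`. -/
def IsFaceCP (n : ℕ) (F : Set (Matrix (Fin n) (Fin n) ℝ)) : Prop :=
  (∀ X ∈ F, IsCP X) ∧
  (∀ X ∈ F, ∀ c : ℝ, 0 ≤ c → c • X ∈ F) ∧
  (∀ X ∈ F, ∀ Y ∈ F, X + Y ∈ F) ∧
  (∀ X Y : Matrix (Fin n) (Fin n) ℝ, IsCP X → IsCP Y → X + Y ∈ F → X ∈ F ∧ Y ∈ F)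

section AuxCP

variable {n : ℕ}

private lemma pairLI_symm {x y : Fin n → ℝ} (h : LinearIndependent ℝ ![x, y]) :
    LinearIndependent ℝ ![y, x] := by
  rw [LinearIndependent.pair_iff] at h ⊢
  intro s t hst
  obtain ⟨h1, h2⟩ := h t s (by rw [← hst]; abel)
  exact ⟨h2, h1⟩

private lemma pairLI_smul {x y : Fin n → ℝ} {c : ℝ} (hc : c ≠ 0)
    (h : LinearIndependent ℝ ![x, y]) : LinearIndependent ℝ ![c • x, y] := by
  rw [LinearIndependent.pair_iff] at h ⊢
  intro s t hst
  have h2 := h (s * c) t (by rw [mul_smul]; exact hst)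
  refine ⟨?_, h2.2⟩
  rcases mul_eq_zero.1 h2.1 with h | h
  · exact h
  · exact absurd h hc

private lemma pairLI_smul_right {x y : Fin n → ℝ} {c : ℝ} (hc : c ≠ 0)
    (h : LinearIndependent ℝ ![x, y]) : LinearIndependent ℝ ![x, c • y] :=
  pairLI_symm (pairLI_smul hc (pairLI_symm h))

private lemma exists_pos_smul {u v : Fin n → ℝ} (hu0 : ∀ i, 0 ≤ u i) (hv0 : ∀ i, 0 ≤ v i)
    (hu : u ≠ 0) (hv : v ≠ 0) (h : ¬ LinearIndependent ℝ ![u, v]) :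
    ∃ a : ℝ, 0 < a ∧ u = a • v := by
  rw [LinearIndependent.pair_iff] at h
  push_neg at h
  obtain ⟨s, t, hst, hne⟩ := h
  have hs : s ≠ 0 := by
    intro h0
    subst h0
    simp only [zero_smul, zero_add] at hst
    rcases smul_eq_zero.1 hst with h | h
    · exact hne rfl h
    · exact hv h
  have key : ∀ i, u i = (-t / s) * v i := by
    intro i
    have h1 : s * u i + t * v i = 0 := by
      have := congrFun hst i
      simpa using this
    field_simp
    linarith
  have huv : u = (-t / s) • v := funext fun i => by simpa using key i
  obtain ⟨j, hj⟩ : ∃ j, v j ≠ 0 := by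
    by_contra hc
    push_neg at hc
    exact hv (funext hc)
  have hvj : 0 < v j := lt_of_le_of_ne (hv0 j) (Ne.symm hj)
  have ha0 : 0 ≤ -t / s := by nlinarith [hu0 j, key j]
  have hane : -t / s ≠ 0 := by
    intro h0
    rw [h0, zero_smul] at huv
    exact hu huv
  exact ⟨-t / s, lt_of_le_of_ne ha0 (Ne.symm hane), huv⟩

private def outerSum (l : List (Fin n → ℝ)) : Matrix (Fin n) (Fin n) ℝ :=
  (l.map fun u => vecMulVec u u).sum

private lemma outerSum_cons (u : Fin n → ℝ) (l : List (Fin n → ℝ)) :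
    outerSum (u :: l) = vecMulVec u u + outerSum l := by
  simp [outerSum]

private lemma outerSum_append (l1 l2 : List (Fin n → ℝ)) :
    outerSum (l1 ++ l2) = outerSum l1 + outerSum l2 := by
  simp [outerSum]

private lemma outer_smul (c : ℝ) (u : Fin n → ℝ) :
    vecMulVec (c • u) (c • u) = (c * c) • vecMulVec u u := by
  ext i j
  simp [vecMulVec_apply]
  ring

private lemma outerSum_smul_sqrt {c : ℝ} (hc : 0 ≤ c) (l : List (Fin n → ℝ)) :
    outerSum (l.map fun u => Real.sqrt c • u) = c • outerSum l := by
  induction l with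
  | nil => simp [outerSum]
  | cons u l ih =>
      simp only [List.map_cons, outerSum_cons, ih, outer_smul, Real.mul_self_sqrt hc, smul_add]

private lemma outerSum_ofFn {k : ℕ} (f : Fin k → (Fin n → ℝ)) :
    outerSum (List.ofFn f) = ∑ i, vecMulVec (f i) (f i) := by
  rw [outerSum, List.map_ofFn, List.sum_ofFn]
  rfl

private lemma insert_lemma (u : Fin n → ℝ) (hu0 : ∀ i, 0 ≤ u i) (hune : u ≠ 0) :
    ∀ l : List (Fin n → ℝ),
    (∀ v ∈ l, ∀ i, 0 ≤ v i) → (∀ v ∈ l, v ≠ 0) →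
    l.Pairwise (fun x y => LinearIndependent ℝ ![x, y]) →
    ∃ l' : List (Fin n → ℝ), (∀ v ∈ l', ∀ i, 0 ≤ v i) ∧ (∀ v ∈ l', v ≠ 0) ∧
      l'.Pairwise (fun x y => LinearIndependent ℝ ![x, y]) ∧
      outerSum l' = vecMulVec u u + outerSum l ∧
      (∀ x ∈ u :: l, ∃ w ∈ l', ∃ t : ℝ, 0 < t ∧ x = t • w) ∧
      (∀ w ∈ l', ∃ x ∈ u :: l, ∃ t : ℝ, 0 < t ∧ w = t • x) := by
  intro l
  induction l with
  | nil =>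
      intro _ _ _
      refine ⟨[u], by simpa using hu0, by simpa using hune, by simp, by simp [outerSum], ?_, ?_⟩
      · intro x hx
        simp only [List.mem_singleton] at hx
        exact ⟨u, by simp, 1, one_pos, by simp [hx]⟩
      · intro w hw
        simp only [List.mem_singleton] at hw
        exact ⟨u, by simp, 1, one_pos, by simp [hw]⟩
  | cons v rest ih =>
      intro h0 hne hp
      rw [List.pairwise_cons] at hp
      obtain ⟨hvrest, hprest⟩ := hp
      have hv0 : ∀ i, 0 ≤ v i := h0 v (by simp)
      have hvne : v ≠ 0 := hne v (by simp)
      by_cases hli : LinearIndependent ℝ ![v, u]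
      · obtain ⟨l3, h3a, h3b, h3c, h3d, h3e, h3f⟩ := ih
          (fun x hx => h0 x (by simp [hx])) (fun x hx => hne x (by simp [hx])) hprest
        refine ⟨v :: l3, ?_, ?_, ?_, ?_, ?_, ?_⟩
        · intro x hx
          rcases List.mem_cons.1 hx with h | h
          · exact h ▸ hv0
          · exact h3a x h
        · intro x hx
          rcases List.mem_cons.1 hx with h | h
          · exact h ▸ hvne
          · exact h3b x h
        · rw [List.pairwise_cons]
          refine ⟨?_, h3c⟩
          intro w hw
          obtain ⟨x, hx, t, ht, rfl⟩ := h3f w hw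
          rcases List.mem_cons.1 hx with h | h
          · exact h ▸ pairLI_smul_right (ne_of_gt ht) hli
          · exact pairLI_smul_right (ne_of_gt ht) (hvrest x h)
        · rw [outerSum_cons, h3d, outerSum_cons]
          abel
        · intro x hx
          rcases List.mem_cons.1 hx with h | h
          · obtain ⟨w, hw, t, ht, hxw⟩ := h3e u (by simp)
            exact ⟨w, by simp [hw], t, ht, h ▸ hxw⟩
          · rcases List.mem_cons.1 h with h' | h'
            · exact ⟨v, by simp, 1, one_pos, by simp [h']⟩
            · obtain ⟨w, hw, t, ht, hxw⟩ := h3e x (by simp [h'])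
              exact ⟨w, by simp [hw], t, ht, hxw⟩
        · intro w hw
          rcases List.mem_cons.1 hw with h | h
          · exact ⟨v, by simp, 1, one_pos, by simp [h]⟩
          · obtain ⟨x, hx, t, ht, hwx⟩ := h3f w h
            rcases List.mem_cons.1 hx with h' | h'
            · exact ⟨u, by simp, t, ht, h' ▸ hwx⟩
            · exact ⟨x, by simp [h'], t, ht, hwx⟩
      · obtain ⟨a, ha, hva⟩ := exists_pos_smul hv0 hu0 hvne hune hli
        set s : ℝ := Real.sqrt (1 + a * a) with hs_def
        have hs : 0 < s := Real.sqrt_pos.2 (by nlinarith)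
        have hss : s * s = 1 + a * a := Real.mul_self_sqrt (by nlinarith)
        have hsu_u : u = s⁻¹ • (s • u) := by rw [inv_smul_smul₀ (ne_of_gt hs)]
        have hsu_v : v = (a / s) • (s • u) := by
          rw [smul_smul, div_mul_cancel₀ _ (ne_of_gt hs), hva]
        refine ⟨(s • u) :: rest, ?_, ?_, ?_, ?_, ?_, ?_⟩
        · intro x hx
          rcases List.mem_cons.1 hx with h | h
          · intro i
            exact h ▸ (by exact mul_nonneg (le_of_lt hs) (hu0 i) : 0 ≤ (s • u) i)
          · exact h0 x (by simp [h])
        · intro x hx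
          rcases List.mem_cons.1 hx with h | h
          · exact h ▸ smul_ne_zero (ne_of_gt hs) hune
          · exact hne x (by simp [h])
        · rw [List.pairwise_cons]
          refine ⟨?_, hprest⟩
          intro w hw
          have hliw : LinearIndependent ℝ ![v, w] := hvrest w hw
          have : LinearIndependent ℝ ![(s / a) • v, w] :=
            pairLI_smul (ne_of_gt (div_pos hs ha)) hliw
          rwa [hva, smul_smul, div_mul_cancel₀ _ (ne_of_gt ha)] at this
        · rw [outerSum_cons, outerSum_cons, outer_smul, hss, hva, outer_smul, add_smul,
            one_smul]
          abel
        · intro x hx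
          rcases List.mem_cons.1 hx with h | h
          · exact ⟨s • u, by simp, s⁻¹, inv_pos.2 hs, h ▸ hsu_u⟩
          · rcases List.mem_cons.1 h with h' | h'
            · exact ⟨s • u, by simp, a / s, div_pos ha hs, h' ▸ hsu_v⟩
            · exact ⟨x, by simp [h'], 1, one_pos, by simp⟩
        · intro w hw
          rcases List.mem_cons.1 hw with h | h
          · exact ⟨u, by simp, s, hs, h⟩
          · exact ⟨w, by simp [h], 1, one_pos, by simp⟩

private lemma merge_lemma : ∀ l : List (Fin n → ℝ),
    (∀ v ∈ l, ∀ i, 0 ≤ v i) → (∀ v ∈ l, v ≠ 0) →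
    ∃ l' : List (Fin n → ℝ), (∀ v ∈ l', ∀ i, 0 ≤ v i) ∧ (∀ v ∈ l', v ≠ 0) ∧
      l'.Pairwise (fun x y => LinearIndependent ℝ ![x, y]) ∧
      outerSum l' = outerSum l ∧
      (∀ x ∈ l, ∃ w ∈ l', ∃ t : ℝ, 0 < t ∧ x = t • w) := by
  intro l
  induction l with
  | nil => exact fun _ _ => ⟨[], by simp, by simp, by simp, rfl, by simp⟩
  | cons u rest ih =>
      intro h0 hne
      obtain ⟨l1, h1a, h1b, h1c, h1d, h1e⟩ := ih
        (fun x hx => h0 x (by simp [hx])) (fun x hx => hne x (by simp [hx]))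
      obtain ⟨l2, h2a, h2b, h2c, h2d, h2e, _⟩ :=
        insert_lemma u (h0 u (by simp)) (hne u (by simp)) l1 h1a h1b h1c
      refine ⟨l2, h2a, h2b, h2c, by rw [h2d, h1d, outerSum_cons], ?_⟩
      intro x hx
      rcases List.mem_cons.1 hx with h | h
      · obtain ⟨w, hw, t, ht, hxw⟩ := h2e u (by simp)
        exact ⟨w, hw, t, ht, h ▸ hxw⟩
      · obtain ⟨w1, hw1, t1, ht1, hxw1⟩ := h1e x h
        obtain ⟨w2, hw2, t2, ht2, hw1w2⟩ := h2e w1 (by simp [hw1])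
        exact ⟨w2, hw2, t1 * t2, mul_pos ht1 ht2, by rw [hxw1, hw1w2, smul_smul]⟩

private lemma cp_toList {X : Matrix (Fin n) (Fin n) ℝ} (hX : IsCP X) :
    ∃ l : List (Fin n → ℝ), (∀ v ∈ l, ∀ i, 0 ≤ v i) ∧ (∀ v ∈ l, v ≠ 0) ∧ outerSum l = X := by
  obtain ⟨L, h1, h2, _, h4⟩ := hX
  refine ⟨L.toList, fun v hv => h1 v (by rwa [Multiset.mem_toList] at hv),
    fun v hv => h2 v (by rwa [Multiset.mem_toList] at hv), ?_⟩
  rw [← Multiset.coe_toList L, Multiset.map_coe, Multiset.sum_coe] at h4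
  exact h4

private lemma list_toCP (l : List (Fin n → ℝ)) (h0 : ∀ v ∈ l, ∀ i, 0 ≤ v i)
    (hne : ∀ v ∈ l, v ≠ 0) : IsCP (outerSum l) := by
  obtain ⟨l', h'0, h'ne, h'p, h'sum, -⟩ := merge_lemma l h0 hne
  refine ⟨↑l', fun v hv => h'0 v (Multiset.mem_coe.1 hv),
    fun v hv => h'ne v (Multiset.mem_coe.1 hv), ⟨l', rfl, h'p⟩, ?_⟩
  rw [Multiset.map_coe, Multiset.sum_coe]
  exact h'sum

private lemma cp_zero : IsCP (0 : Matrix (Fin n) (Fin n) ℝ) :=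
  ⟨0, fun v hv => absurd hv (Multiset.notMem_zero v),
    fun v hv => absurd hv (Multiset.notMem_zero v), Multiset.pairwise_zero _, by simp⟩

private lemma cp_add {X Y : Matrix (Fin n) (Fin n) ℝ} (hX : IsCP X) (hY : IsCP Y) :
    IsCP (X + Y) := by
  obtain ⟨l1, a1, b1, c1⟩ := cp_toList hX
  obtain ⟨l2, a2, b2, c2⟩ := cp_toList hY
  have := list_toCP (l1 ++ l2)
    (fun v hv => (List.mem_append.1 hv).elim (a1 v) (a2 v))
    (fun v hv => (List.mem_append.1 hv).elim (b1 v) (b2 v))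
  rwa [outerSum_append, c1, c2] at this

variable {k : ℕ}

private def Kcone (b : Fin k → (Fin n → ℝ)) : Set (Matrix (Fin n) (Fin n) ℝ) :=
  {X | ∃ c : Fin k → ℝ, (∀ i, 0 ≤ c i) ∧ X = ∑ i, c i • vecMulVec (b i) (b i)}

private lemma mem_Kcone {b : Fin k → (Fin n → ℝ)} {X : Matrix (Fin n) (Fin n) ℝ} :
    X ∈ Kcone b ↔
      ∃ c : Fin k → ℝ, (∀ i, 0 ≤ c i) ∧ X = ∑ i, c i • vecMulVec (b i) (b i) := Iff.rfl

private lemma K_zero (b : Fin k → (Fin n → ℝ)) : (0 : Matrix (Fin n) (Fin n) ℝ) ∈ Kcone b :=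
  ⟨fun _ => 0, fun _ => le_rfl, by simp⟩

private lemma K_add {b : Fin k → (Fin n → ℝ)} {X Y : Matrix (Fin n) (Fin n) ℝ}
    (hX : X ∈ Kcone b) (hY : Y ∈ Kcone b) : X + Y ∈ Kcone b := by
  obtain ⟨c1, hc1, rfl⟩ := hX
  obtain ⟨c2, hc2, rfl⟩ := hY
  exact ⟨fun i => c1 i + c2 i, fun i => add_nonneg (hc1 i) (hc2 i), by
    rw [← Finset.sum_add_distrib]
    exact Finset.sum_congr rfl fun i _ => (add_smul _ _ _).symm⟩

private lemma K_smul {b : Fin k → (Fin n → ℝ)} {X : Matrix (Fin n) (Fin n) ℝ}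
    (hX : X ∈ Kcone b) (t : ℝ) (ht : 0 ≤ t) : t • X ∈ Kcone b := by
  obtain ⟨c, hc, rfl⟩ := hX
  exact ⟨fun i => t * c i, fun i => mul_nonneg ht (hc i), by
    rw [Finset.smul_sum]
    exact Finset.sum_congr rfl fun i _ => by dsimp only; rw [smul_smul]⟩

private lemma K_B (b : Fin k → (Fin n → ℝ)) (i : Fin k) (s : ℝ) (hs : 0 ≤ s) :
    s • vecMulVec (b i) (b i) ∈ Kcone b := by
  refine ⟨fun j => if j = i then s else 0, fun j => by by_cases h : j = i <;> simp [h, hs], ?_⟩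
  simp [ite_smul]

private lemma K_listsum {b : Fin k → (Fin n → ℝ)} :
    ∀ l : List (Fin n → ℝ), (∀ u ∈ l, vecMulVec u u ∈ Kcone b) → outerSum l ∈ Kcone b := by
  intro l
  induction l with
  | nil => exact fun _ => K_zero b
  | cons u rest ih =>
      intro h
      rw [outerSum_cons]
      exact K_add (h u (by simp)) (ih fun x hx => h x (by simp [hx]))

private lemma K_CP {b : Fin k → (Fin n → ℝ)} (hb0 : ∀ i j, 0 ≤ b i j)
    (hbne : ∀ i, b i ≠ 0) {X : Matrix (Fin n) (Fin n) ℝ} (hX : X ∈ Kcone b) : IsCP X := by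
  obtain ⟨c, hc, rfl⟩ := hX
  refine Finset.sum_induction _ IsCP (fun a b ha hb => cp_add ha hb) cp_zero ?_
  intro i _
  rcases eq_or_lt_of_le (hc i) with h | h
  · rw [← h, zero_smul]
    exact cp_zero
  · have h1 : outerSum [Real.sqrt (c i) • b i] = c i • vecMulVec (b i) (b i) := by
      simp [outerSum, outer_smul, smul_smul, Real.mul_self_sqrt (le_of_lt h)]
    have := list_toCP [Real.sqrt (c i) • b i]
      (by
        intro v hv j
        simp only [List.mem_singleton] at hv
        subst hv
        exact mul_nonneg (Real.sqrt_nonneg _) (hb0 i j))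
      (by
        intro v hv
        simp only [List.mem_singleton] at hv
        subst hv
        exact smul_ne_zero (ne_of_gt (Real.sqrt_pos.2 h)) (hbne i))
    rwa [h1] at this

private lemma K_face4 {A : Matrix (Fin n) (Fin n) ℝ} {b : Fin k → (Fin n → ℝ)}
    (hb0 : ∀ i j, 0 ≤ b i j) (hbne : ∀ i, b i ≠ 0)
    (hA : A = ∑ i, vecMulVec (b i) (b i))
    (huniq : ∀ L, IsCPRep A L → L = Multiset.map b (Finset.univ.val : Multiset (Fin k)))
    (X Y : Matrix (Fin n) (Fin n) ℝ) (hX : IsCP X) (hY : IsCP Y)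
    (hXY : X + Y ∈ Kcone b) : X ∈ Kcone b ∧ Y ∈ Kcone b := by
  obtain ⟨c, hc, hXYc⟩ := hXY
  obtain ⟨lX, aX, bX, cX⟩ := cp_toList hX
  obtain ⟨lY, aY, bY, cY⟩ := cp_toList hY
  set T := ∑ i, c i with hT
  have hT0 : 0 ≤ T := Finset.sum_nonneg fun i _ => hc i
  set t := (1 + T)⁻¹ with ht_def
  have ht : 0 < t := inv_pos.2 (by linarith)
  have htc0 : ∀ i, 0 < 1 - t * c i := by
    intro i
    have hci : c i ≤ T := Finset.single_le_sum (fun j _ => hc j) (Finset.mem_univ i)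
    have : t * c i < 1 := by
      rw [ht_def, mul_comm, ← div_eq_mul_inv, div_lt_one (by linarith)]
      linarith
    linarith
  have htsne : Real.sqrt t ≠ 0 := ne_of_gt (Real.sqrt_pos.2 ht)
  set M := (List.ofFn fun i => Real.sqrt (1 - t * c i) • b i) ++
      (lX.map fun u => Real.sqrt t • u) ++ (lY.map fun u => Real.sqrt t • u) with hM
  have hM0 : ∀ v ∈ M, ∀ i, 0 ≤ v i := by
    intro v hv i
    rcases List.mem_append.1 hv with hv | hv
    · rcases List.mem_append.1 hv with hv | hv
      · obtain ⟨j, rfl⟩ := List.mem_ofFn.1 hv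
        exact mul_nonneg (Real.sqrt_nonneg _) (hb0 j i)
      · obtain ⟨u, hu, rfl⟩ := List.mem_map.1 hv
        exact mul_nonneg (Real.sqrt_nonneg _) (aX u hu i)
    · obtain ⟨u, hu, rfl⟩ := List.mem_map.1 hv
      exact mul_nonneg (Real.sqrt_nonneg _) (aY u hu i)
  have hMne : ∀ v ∈ M, v ≠ 0 := by
    intro v hv
    rcases List.mem_append.1 hv with hv | hv
    · rcases List.mem_append.1 hv with hv | hv
      · obtain ⟨j, rfl⟩ := List.mem_ofFn.1 hv
        exact smul_ne_zero (ne_of_gt (Real.sqrt_pos.2 (htc0 j))) (hbne j)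
      · obtain ⟨u, hu, rfl⟩ := List.mem_map.1 hv
        exact smul_ne_zero htsne (bX u hu)
    · obtain ⟨u, hu, rfl⟩ := List.mem_map.1 hv
      exact smul_ne_zero htsne (bY u hu)
  have hMsum : outerSum M = A := by
    rw [hM, outerSum_append, outerSum_append, outerSum_ofFn,
      outerSum_smul_sqrt (le_of_lt ht), outerSum_smul_sqrt (le_of_lt ht), cX, cY]
    have h1 : (∑ i, vecMulVec (Real.sqrt (1 - t * c i) • b i) (Real.sqrt (1 - t * c i) • b i))
        = ∑ i, (1 - t * c i) • vecMulVec (b i) (b i) :=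
      Finset.sum_congr rfl fun i _ => by
        rw [outer_smul, Real.mul_self_sqrt (le_of_lt (htc0 i))]
    have h2 : (∑ i, (1 - t * c i) • vecMulVec (b i) (b i)) = A - t • (X + Y) := by
      rw [hXYc, hA, Finset.smul_sum, ← Finset.sum_sub_distrib]
      exact Finset.sum_congr rfl fun i _ => by rw [sub_smul, one_smul, smul_smul]
    rw [h1, h2, smul_add]
    abel
  obtain ⟨l', h'0, h'ne, h'p, h'sum, h'map⟩ := merge_lemma M hM0 hMne
  have hrep' : IsCPRep A (↑l' : Multiset (Fin n → ℝ)) := by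
    refine ⟨fun v hv => h'0 v (Multiset.mem_coe.1 hv),
      fun v hv => h'ne v (Multiset.mem_coe.1 hv), ⟨l', rfl, h'p⟩, ?_⟩
    rw [Multiset.map_coe, Multiset.sum_coe]
    exact h'sum.trans hMsum
  have hl'uniq := huniq _ hrep'
  have key : ∀ (l0 : List (Fin n → ℝ)), (∀ u ∈ l0, (Real.sqrt t • u) ∈ M) →
      outerSum l0 ∈ Kcone b := by
    intro l0 hl0
    refine K_listsum l0 ?_
    intro u hu
    obtain ⟨w, hw, s0, hs0, hus⟩ := h'map _ (hl0 u hu)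
    have hwmem : w ∈ (↑l' : Multiset (Fin n → ℝ)) := Multiset.mem_coe.2 hw
    rw [hl'uniq] at hwmem
    obtain ⟨i, -, rfl⟩ := Multiset.mem_map.1 hwmem
    have hu_eq : u = ((Real.sqrt t)⁻¹ * s0) • b i := by
      have h1 : (Real.sqrt t)⁻¹ • (Real.sqrt t • u) = (Real.sqrt t)⁻¹ • (s0 • b i) := by
        rw [hus]
      rw [inv_smul_smul₀ htsne] at h1
      rw [h1, smul_smul]
    rw [hu_eq, outer_smul]
    exact K_B b i _ (mul_self_nonneg _)
  constructor
  · have := key lX (fun u hu => List.mem_append.2 (Or.inl (List.mem_append.2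
      (Or.inr (List.mem_map.2 ⟨u, hu, rfl⟩)))))
    rwa [cX] at this
  · have := key lY (fun u hu => List.mem_append.2 (Or.inr (List.mem_map.2 ⟨u, hu, rfl⟩)))
    rwa [cY] at this

end AuxCP

/-- If `A` has a unique CP representation `A = Σᵢ bᵢbᵢᵀ`, then the minimal face of
`CP_n` containing `A` is the polyhedral cone generated by the `bᵢbᵢᵀ`. -/
theorem stmt_19 (n k : ℕ) (A : Matrix (Fin n) (Fin n) ℝ) (b : Fin k → (Fin n → ℝ))
    (hrep : IsCPRep A (Multiset.map b (Finset.univ.val : Multiset (Fin k))))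
    (huniq : ∀ L, IsCPRep A L → L = Multiset.map b (Finset.univ.val : Multiset (Fin k))) :
    ⋂₀ {F | IsFaceCP n F ∧ A ∈ F} =
      {X | ∃ c : Fin k → ℝ, (∀ i, 0 ≤ c i) ∧
        X = ∑ i, c i • vecMulVec (b i) (b i)} := by
  classical
  have hb0 : ∀ (i : Fin k) (j : Fin n), 0 ≤ b i j := fun i =>
    hrep.1 (b i) (Multiset.mem_map.2 ⟨i, by simp, rfl⟩)
  have hbne : ∀ i : Fin k, b i ≠ 0 := fun i =>
    hrep.2.1 (b i) (Multiset.mem_map.2 ⟨i, by simp, rfl⟩)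
  have hA : A = ∑ i, vecMulVec (b i) (b i) := by
    rw [← hrep.2.2.2, Multiset.map_map]
    rfl
  have hAK : A ∈ Kcone b := ⟨fun _ => 1, fun _ => zero_le_one, by simp [hA]⟩
  have hKface : IsFaceCP n (Kcone b) :=
    ⟨fun X hX => K_CP hb0 hbne hX, fun X hX c hc => K_smul hX c hc,
      fun X hX Y hY => K_add hX hY,
      fun X Y hX hY hXY => K_face4 hb0 hbne hA huniq X Y hX hY hXY⟩
  apply Set.Subset.antisymm
  · exact Set.sInter_subset_of_mem ⟨hKface, hAK⟩
  · intro X hXK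
    rw [Set.mem_sInter]
    rintro F ⟨⟨hF1, hF2, hF3, hF4⟩, hAF⟩
    have hF0 : (0 : Matrix (Fin n) (Fin n) ℝ) ∈ F := by
      have := hF2 A hAF 0 le_rfl
      rwa [zero_smul] at this
    have hBF : ∀ i : Fin k, vecMulVec (b i) (b i) ∈ F := by
      intro i
      have hsplit : (∑ j, (if j = i then (1 : ℝ) else 0) • vecMulVec (b j) (b j)) +
          (∑ j, (if j = i then (0 : ℝ) else 1) • vecMulVec (b j) (b j)) = A := by
        rw [← Finset.sum_add_distrib, hA]
        refine Finset.sum_congr rfl fun j _ => ?_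
        split <;> simp
      have c1 : (∑ j, (if j = i then (1 : ℝ) else 0) • vecMulVec (b j) (b j)) ∈ Kcone b :=
        ⟨fun j => if j = i then 1 else 0, fun j => by dsimp only; split <;> norm_num, rfl⟩
      have c2 : (∑ j, (if j = i then (0 : ℝ) else 1) • vecMulVec (b j) (b j)) ∈ Kcone b :=
        ⟨fun j => if j = i then 0 else 1, fun j => by dsimp only; split <;> norm_num, rfl⟩
      have := (hF4 _ _ (K_CP hb0 hbne c1) (K_CP hb0 hbne c2) (by rw [hsplit]; exact hAF)).1
      have heq : (∑ j, (if j = i then (1 : ℝ) else 0) • vecMulVec (b j) (b j)) =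
          vecMulVec (b i) (b i) := by
        simp [ite_smul]
      rwa [heq] at this
    obtain ⟨c, hc, rfl⟩ := hXK
    exact Finset.sum_induction _ (· ∈ F) (fun a b ha hb => hF3 a ha b hb) hF0
      (fun i _ => hF2 _ (hBF i) (c i) (hc i))
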